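/- For 0 < σ < 1, ε = (1-σ)^{1/n}, and n ≥ 3, the limit as σ ↑ 1 of (1-σ) ∫_0^ε ∫_ξ^ε r^{1-n-σ} ξ^{n-2} dr dξ equals 1/(n-1). -/

import Mathlib

open MeasureTheory Real Filter

theorem stmt3 (n : ℕ) (hn : 3 ≤ n) :
    Filter.Tendsto
      (fun σ : ℝ => (1 - σ) *
        ∫ ξ in (0 : ℝ)..((1 - σ) ^ ((1 : ℝ) / n)),
          ∫ r in ξ..((1 - σ) ^ ((1 : ℝ) / n)),
            r ^ ((1 : ℝ) - n - σ) * ξ ^ ((n : ℝ) - 2))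
      (nhdsWithin 1 (Set.Iio 1)) (nhds (1 / ((n : ℝ) - 1))) := by
  have hn3 : (3:ℝ) ≤ (n:ℝ) := by exact_mod_cast hn
  set g : ℝ → ℝ := fun σ => Real.exp (Real.log (1 - σ) * (1 - σ) * (1 / n)) *
      (((1 - σ) / ((n:ℝ) - 1) - 1) / ((2:ℝ) - n - σ)) with hg
  have hmem : Set.Ioo (0:ℝ) 1 ∈ nhdsWithin (1:ℝ) (Set.Iio 1) :=
    Ioo_mem_nhdsLT_of_mem (by constructor <;> norm_num)
  have heq : g =ᶠ[nhdsWithin (1:ℝ) (Set.Iio 1)]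
      (fun σ : ℝ => (1 - σ) *
        ∫ ξ in (0 : ℝ)..((1 - σ) ^ ((1 : ℝ) / n)),
          ∫ r in ξ..((1 - σ) ^ ((1 : ℝ) / n)),
            r ^ ((1 : ℝ) - n - σ) * ξ ^ ((n : ℝ) - 2)) := by
    filter_upwards [hmem] with σ hσ
    have h1σ : (0:ℝ) < 1 - σ := by linarith [hσ.2]
    set ε : ℝ := (1 - σ) ^ ((1:ℝ) / n) with hε
    have hε0 : (0:ℝ) < ε := Real.rpow_pos_of_pos h1σ _
    have hq : (2:ℝ) - n - σ ≠ 0 := by nlinarith [hσ.1]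
    have hp : (1:ℝ) - n - σ ≠ -1 := by nlinarith [hσ.1]
    have hm : (-1:ℝ) < (n:ℝ) - 2 := by linarith
    have hs : (-1:ℝ) < -σ := by linarith [hσ.2]
    have hinner : Set.EqOn
        (fun ξ : ℝ => ∫ r in ξ..ε, r ^ ((1:ℝ) - n - σ) * ξ ^ ((n : ℝ) - 2))
        (fun ξ : ℝ => (ε ^ ((2:ℝ) - n - σ) * ξ ^ ((n:ℝ) - 2) - ξ ^ (-σ)) / ((2:ℝ) - n - σ))
        (Set.uIcc (0:ℝ) ε) := by
      intro ξ hξ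
      rw [Set.uIcc_of_le hε0.le] at hξ
      rcases eq_or_lt_of_le hξ.1 with h0 | h0
      · simp only [← h0]
        rw [Real.zero_rpow (by linarith : (n:ℝ) - 2 ≠ 0),
            Real.zero_rpow (by linarith [hσ.1] : -σ ≠ 0)]
        simp
      · simp only
        rw [intervalIntegral.integral_mul_const,
            integral_rpow (Or.inr ⟨hp, by
              rw [Set.uIcc_of_le hξ.2]
              exact fun h => absurd h.1 (not_le.2 h0)⟩)]
        have e1 : (1:ℝ) - n - σ + 1 = (2:ℝ) - n - σ := by ring
        rw [e1, div_mul_eq_mul_div, sub_mul, ← Real.rpow_add h0,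
            show (2:ℝ) - n - σ + ((n:ℝ) - 2) = -σ by ring]
    rw [intervalIntegral.integral_congr hinner]
    have hi1 : IntervalIntegrable (fun ξ : ℝ => ε ^ ((2:ℝ) - n - σ) * ξ ^ ((n:ℝ) - 2))
        volume 0 ε := (intervalIntegral.intervalIntegrable_rpow' hm).const_mul _
    have hi2 : IntervalIntegrable (fun ξ : ℝ => ξ ^ (-σ)) volume 0 ε :=
      intervalIntegral.intervalIntegrable_rpow' hs
    rw [intervalIntegral.integral_div, intervalIntegral.integral_sub hi1 hi2,
        intervalIntegral.integral_const_mul, integral_rpow (Or.inl hm),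
        integral_rpow (Or.inl hs)]
    rw [Real.zero_rpow (by linarith : (n:ℝ) - 2 + 1 ≠ 0),
        Real.zero_rpow (by linarith [hσ.2] : -σ + 1 ≠ 0)]
    have key : ε ^ ((2:ℝ) - n - σ) * ε ^ ((n:ℝ) - 2 + 1) = ε ^ (-σ + 1) := by
      rw [← Real.rpow_add hε0]; ring_nf
    have key2 : ε ^ (-σ + 1) = Real.exp (Real.log (1 - σ) * (1 - σ) * (1 / n)) := by
      rw [hε, ← Real.rpow_mul h1σ.le, Real.rpow_def_of_pos h1σ]
      ring_nf
    have hn1 : (n:ℝ) - 1 ≠ 0 := by linarith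
    have hne : (n:ℝ) - 2 + 1 ≠ 0 := by linarith
    have hse : -σ + 1 ≠ 0 := by linarith [hσ.2]
    rw [sub_zero, sub_zero,
        show ε ^ ((2:ℝ) - ↑n - σ) * (ε ^ ((n:ℝ) - 2 + 1) / ((n:ℝ) - 2 + 1)) =
          ε ^ (-σ + 1) / ((n:ℝ) - 2 + 1) by rw [← mul_div_assoc, key], key2, hg]
    have h2 : (1:ℝ) - σ ≠ 0 := h1σ.ne'
    field_simp
    ring
  refine Filter.Tendsto.congr' heq ?_
  rw [hg]
  have h0 : Filter.Tendsto (fun σ : ℝ => 1 - σ) (nhdsWithin 1 (Set.Iio 1))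
      (nhdsWithin 0 (Set.Ioi 0)) := by
    apply tendsto_nhdsWithin_of_tendsto_nhds_of_eventually_within
    · have : Filter.Tendsto (fun σ : ℝ => 1 - σ) (nhds 1) (nhds (1 - 1)) :=
        (continuous_const.sub continuous_id).tendsto 1
      simpa using this.mono_left nhdsWithin_le_nhds
    · filter_upwards [eventually_mem_nhdsWithin] with σ (hσ : σ < 1)
      simpa using hσ
  have hlm : Filter.Tendsto (fun x : ℝ => Real.log x * x) (nhdsWithin 0 (Set.Ioi 0))
      (nhds 0) := by
    have := tendsto_log_mul_rpow_nhdsGT_zero one_pos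
    refine this.congr fun x => by rw [Real.rpow_one]
  have h1 : Filter.Tendsto (fun σ : ℝ => Real.exp (Real.log (1 - σ) * (1 - σ) * (1 / n)))
      (nhdsWithin 1 (Set.Iio 1)) (nhds 1) := by
    have h3 : Filter.Tendsto (fun σ : ℝ => Real.log (1 - σ) * (1 - σ) * (1 / n))
        (nhdsWithin 1 (Set.Iio 1)) (nhds 0) := by
      have := (hlm.comp h0).mul_const ((1:ℝ) / n)
      simpa using this
    have := (Real.continuous_exp.tendsto 0).comp h3
    simpa [Function.comp_def] using this
  have hd : (2:ℝ) - n - 1 ≠ 0 := by linarith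
  have h2 : Filter.Tendsto (fun σ : ℝ => ((1 - σ) / ((n:ℝ) - 1) - 1) / ((2:ℝ) - n - σ))
      (nhdsWithin 1 (Set.Iio 1)) (nhds (1 / ((n:ℝ) - 1))) := by
    have hc : ContinuousAt (fun σ : ℝ => ((1 - σ) / ((n:ℝ) - 1) - 1) / ((2:ℝ) - n - σ)) 1 := by
      apply ContinuousAt.div
      · fun_prop
      · fun_prop
      · exact hd
    have := hc.tendsto.mono_left (nhdsWithin_le_nhds (s := Set.Iio (1:ℝ)))
    have hval : ((1 - (1:ℝ)) / ((n:ℝ) - 1) - 1) / ((2:ℝ) - n - 1) = 1 / ((n:ℝ) - 1) := by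
      have hn1 : (n:ℝ) - 1 ≠ 0 := by linarith
      field_simp
      ring
    rwa [hval] at this
  have := h1.mul h2
  simpa using this
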